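/- Let S₁, …, S_{n+1} be i.i.d. real random variables. Then for each k ∈ {1, …, n+1}, the probability that S_{n+1} is among the k smallest values (i.e., at most the k-th order statistic of all n+1 values) is at least k/(n+1). If the variables are almost surely distinct, this probability equals k/(n+1). -/

import Mathlib

open MeasureTheory ProbabilityTheory

/-- The `i`-th order statistic (in increasing order) of a finite tuple of reals. -/
noncomputable def orderStat {n : ℕ} (x : Fin n → ℝ) (i : Fin n) : ℝ :=
  x (Tuple.sort x i)

open Finset
open scoped ENNReal

namespace IidRank

lemma card_filter_val_lt (N k : ℕ) (hk : k ≤ N) :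
    ((univ : Finset (Fin N)).filter fun m : Fin N => (m : ℕ) < k).card = k := by
  have h : ((univ : Finset (Fin N)).filter fun m : Fin N => (m : ℕ) < k)
      = (Finset.range k).attachFin
        (fun m hm => lt_of_lt_of_le (Finset.mem_range.mp hm) hk) := by
    ext m; simp [Finset.mem_attachFin]
  rw [h, Finset.card_attachFin, Finset.card_range]

lemma card_filter_comp_perm {N : ℕ} (σ : Equiv.Perm (Fin N)) (p : Fin N → Prop)
    [DecidablePred p] :
    ((univ : Finset (Fin N)).filter fun j => p (σ j)).card = (univ.filter p).card := by
  apply Finset.card_nbij σ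
  · intro a ha; simp only [mem_coe, mem_filter, mem_univ, true_and] at *; exact ha
  · exact fun a _ b _ h => σ.injective h
  · intro b hb
    refine ⟨σ.symm b, ?_, by simp⟩
    simp only [Set.mem_setOf_eq, coe_filter, Set.mem_setOf_eq, mem_univ, true_and] at hb ⊢
    simpa using hb

variable {n : ℕ}

lemma le_orderStat_iff (x : Fin (n + 1) → ℝ) (t : ℝ) {k : ℕ} (hk1 : 1 ≤ k) (hk : k ≤ n + 1) :
    t ≤ orderStat x ⟨k - 1, Nat.sub_one_lt_of_le hk1 hk⟩ ↔ (univ.filter fun j => x j < t).card < k := by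
  set σ := Tuple.sort x with hσ
  have hmono : Monotone (x ∘ σ) := Tuple.monotone_sort x
  have hcard : (univ.filter fun j => x j < t).card
      = (univ.filter fun j => x (σ j) < t).card :=
    (card_filter_comp_perm σ fun j => x j < t).symm
  rw [hcard]
  show t ≤ x (σ _) ↔ _
  constructor
  · intro h
    by_contra hc
    push_neg at hc
    obtain ⟨j, hj, hjk⟩ : ∃ j ∈ univ.filter (fun j => x (σ j) < t), (k - 1 : ℕ) ≤ (j : ℕ) := by
      by_contra hno
      push_neg at hno
      have hsub : univ.filter (fun j => x (σ j) < t)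
          ⊆ univ.filter fun m : Fin (n + 1) => (m : ℕ) < k - 1 := by
        intro m hm
        simp only [mem_filter, mem_univ, true_and] at hm ⊢
        have := hno m (by simp [hm])
        omega
      have := Finset.card_le_card hsub
      rw [card_filter_val_lt (n + 1) (k - 1) (by omega)] at this
      omega
    have hle : x (σ ⟨k - 1, by omega⟩) ≤ x (σ j) :=
      hmono (show (⟨k - 1, by omega⟩ : Fin (n + 1)) ≤ j from Fin.le_def.mpr hjk)
    have hjl : x (σ j) < t := by simpa using hj
    linarith
  · intro h
    by_contra hc
    push_neg at hc
    have hsub : (univ.filter fun m : Fin (n + 1) => (m : ℕ) < k)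
        ⊆ univ.filter (fun j => x (σ j) < t) := by
      intro m hm
      simp only [mem_filter, mem_univ, true_and] at hm ⊢
      have hle : m ≤ (⟨k - 1, by omega⟩ : Fin (n + 1)) := Fin.le_def.mpr (by simp; omega)
      exact lt_of_le_of_lt (hmono hle) hc
    have := Finset.card_le_card hsub
    rw [card_filter_val_lt (n + 1) k hk] at this
    omega

lemma k_le_card_rank_lt (x : Fin (n + 1) → ℝ) {k : ℕ} (hk : k ≤ n + 1) :
    k ≤ (univ.filter fun i => (univ.filter fun j => x j < x i).card < k).card := by
  set σ := Tuple.sort x with hσ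
  have hmono : Monotone (x ∘ σ) := Tuple.monotone_sort x
  have himg : ((univ.filter fun m : Fin (n + 1) => (m : ℕ) < k).image σ)
      ⊆ univ.filter fun i => (univ.filter fun j => x j < x i).card < k := by
    intro i hi
    simp only [mem_image, mem_filter, mem_univ, true_and] at hi ⊢
    obtain ⟨m, hm, rfl⟩ := hi
    calc (univ.filter fun j => x j < x (σ m)).card
        = (univ.filter fun j => x (σ j) < x (σ m)).card :=
          (card_filter_comp_perm σ _).symm
      _ ≤ (univ.filter fun j : Fin (n + 1) => (j : ℕ) < (m : ℕ)).card := by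
          apply Finset.card_le_card
          intro j hj
          simp only [mem_filter, mem_univ, true_and] at hj ⊢
          by_contra hle
          push_neg at hle
          have : x (σ m) ≤ x (σ j) := hmono (Fin.le_def.mpr hle)
          linarith
      _ = (m : ℕ) := card_filter_val_lt (n+1) (m:ℕ) m.isLt.le
      _ < k := hm
  calc k = ((univ.filter fun m : Fin (n + 1) => (m : ℕ) < k).image σ).card := by
        rw [Finset.card_image_of_injective _ σ.injective, card_filter_val_lt _ _ hk]
    _ ≤ _ := Finset.card_le_card himg

lemma card_rank_lt_of_injective (x : Fin (n + 1) → ℝ) (hx : Function.Injective x)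
    {k : ℕ} (hk : k ≤ n + 1) :
    (univ.filter fun i => (univ.filter fun j => x j < x i).card < k).card = k := by
  set N : Fin (n + 1) → ℕ := fun i => (univ.filter fun j => x j < x i).card with hN
  have hNle : ∀ i, N i ≤ n := by
    intro i
    have hsub : (univ.filter fun j => x j < x i) ⊆ univ.erase i := by
      intro j hj
      simp only [mem_filter, mem_univ, true_and] at hj
      exact Finset.mem_erase.mpr ⟨fun h => absurd (h ▸ hj) (lt_irrefl _), mem_univ _⟩
    calc N i ≤ (univ.erase i).card := Finset.card_le_card hsub
      _ = n := by rw [Finset.card_erase_of_mem (mem_univ _)]; simp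
  have hstrict : ∀ i j, x i < x j → N i < N j := by
    intro i j hij
    have hnotmem : i ∉ univ.filter fun l => x l < x i := by simp
    have hsub : insert i (univ.filter fun l => x l < x i)
        ⊆ univ.filter fun l => x l < x j := by
      intro l hl
      rcases Finset.mem_insert.mp hl with rfl | hl
      · simp [hij]
      · simp only [mem_filter, mem_univ, true_and] at hl ⊢; linarith
    have := Finset.card_le_card hsub
    rw [Finset.card_insert_of_notMem hnotmem] at this
    exact this
  set M : Fin (n + 1) → Fin (n + 1) := fun i => ⟨N i, Nat.lt_succ_of_le (hNle i)⟩ with hM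
  have hMinj : Function.Injective M := by
    intro i j h
    by_contra hne
    have hNij : N i = N j := by simpa [hM, Fin.mk.injEq] using h
    rcases lt_trichotomy (x i) (x j) with h1 | h1 | h1
    · exact absurd hNij (Nat.ne_of_lt (hstrict i j h1))
    · exact hne (hx h1)
    · exact absurd hNij.symm (Nat.ne_of_lt (hstrict j i h1))
  have hMbij : Function.Bijective M := Finite.injective_iff_bijective.mp hMinj
  have hcard : (univ.filter fun i => N i < k).card
      = (univ.filter fun m : Fin (n + 1) => (m : ℕ) < k).card := by
    apply Finset.card_nbij M
    · intro i hi
      simp only [mem_coe, mem_filter, mem_univ, true_and] at hi ⊢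
      exact hi
    · exact fun a _ b _ h => hMinj h
    · intro m hm
      obtain ⟨i, rfl⟩ := hMbij.2 m
      simp only [Set.mem_setOf_eq, coe_filter, mem_univ, true_and] at hm ⊢
      exact ⟨i, hm, rfl⟩
  rw [hcard, card_filter_val_lt _ _ hk]

end IidRank

/-- Rank lemma for i.i.d. scores: `S (n+1)` is at most the `k`-th order statistic of all
`n+1` values with probability at least `k/(n+1)`, with equality when the values are
almost surely pairwise distinct. -/
theorem iid_rank_bound {Ω : Type*} [MeasurableSpace Ω]
    (P : Measure Ω) [IsProbabilityMeasure P] (n : ℕ)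
    (S : Fin (n + 1) → Ω → ℝ) (hmeas : ∀ i, Measurable (S i))
    (hindep : iIndepFun S P)
    (hident : ∀ i, P.map (S i) = P.map (S 0))
    (k : ℕ) (hk1 : 1 ≤ k) (hk : k ≤ n + 1) :
    ENNReal.ofReal ((k : ℝ) / (n + 1)) ≤
      P {ω | S (Fin.last n) ω ≤ orderStat (fun i => S i ω) ⟨k - 1, by omega⟩} ∧
    (P {ω | ∀ i j : Fin (n + 1), i ≠ j → S i ω ≠ S j ω} = 1 →
      P {ω | S (Fin.last n) ω ≤ orderStat (fun i => S i ω) ⟨k - 1, by omega⟩} =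
        ENNReal.ofReal ((k : ℝ) / (n + 1))) := by
  classical
  set μ := P.map (S 0) with hμ
  have hprob : IsProbabilityMeasure μ := Measure.isProbabilityMeasure_map (hmeas 0).aemeasurable
  have hμi : ∀ (i) (t : Set ℝ), MeasurableSet t → P (S i ⁻¹' t) = μ t := by
    intro i t ht
    rw [← hident i, Measure.map_apply (hmeas i) ht]
  have hjoint : ∀ σ : Equiv.Perm (Fin (n + 1)),
      P.map (fun ω j => S (σ j) ω) = Measure.pi (fun _ => μ) := by
    intro σ
    refine (Measure.pi_eq fun s hs => ?_).symm
    rw [Measure.map_apply (measurable_pi_lambda _ fun j => hmeas (σ j))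
      (MeasurableSet.univ_pi hs)]
    have hpre : (fun ω j => S (σ j) ω) ⁻¹' Set.pi Set.univ s
        = ⋂ i ∈ Finset.univ, S i ⁻¹' s (σ.symm i) := by
      ext ω
      simp only [Set.mem_preimage, Set.mem_univ_pi, Set.mem_iInter, Set.mem_preimage,
        Finset.mem_univ, Set.iInter_true]
      constructor
      · intro h i; simpa using h (σ.symm i)
      · intro h j; simpa using h (σ j)
    rw [hpre, hindep.measure_inter_preimage_eq_mul Finset.univ (fun i _ => hs (σ.symm i))]
    calc ∏ i, P (S i ⁻¹' s (σ.symm i)) = ∏ i, μ (s (σ.symm i)) :=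
          Finset.prod_congr rfl fun i _ => hμi i _ (hs _)
      _ = ∏ j, μ (s j) := Equiv.prod_comp σ.symm fun j => μ (s j)
  -- the count function and the event B
  have hcardmeas : Measurable fun x : Fin (n + 1) → ℝ =>
      ((univ.filter fun j => x j < x (Fin.last n)).card : ℕ) := by
    have h : (fun x : Fin (n + 1) → ℝ => (univ.filter fun j => x j < x (Fin.last n)).card)
        = fun x => ∑ j : Fin (n + 1), if x j < x (Fin.last n) then 1 else 0 := by
      funext x; rw [Finset.card_filter]
    rw [h]
    exact Finset.measurable_sum _ fun j _ => Measurable.ite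
      (measurableSet_lt (measurable_pi_apply j) (measurable_pi_apply (Fin.last n)))
      measurable_const measurable_const
  set B : Set (Fin (n + 1) → ℝ) :=
    {x | (univ.filter fun j => x j < x (Fin.last n)).card < k} with hB
  have hBmeas : MeasurableSet B := hcardmeas (show MeasurableSet {m : ℕ | m < k} from trivial)
  set A : Fin (n + 1) → Set Ω :=
    fun i => {ω | (univ.filter fun j => S j ω < S i ω).card < k} with hA
  have hApre : ∀ i, A i = (fun ω j => S ((Equiv.swap i (Fin.last n)) j) ω) ⁻¹' B := by
    intro i
    ext ω
    simp only [hA, hB, Set.mem_preimage, Set.mem_setOf_eq]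
    have h2 : (univ.filter fun j => S ((Equiv.swap i (Fin.last n)) j) ω
        < S ((Equiv.swap i (Fin.last n)) (Fin.last n)) ω).card
        = (univ.filter fun j => S j ω < S i ω).card := by
      rw [Equiv.swap_apply_right]
      exact IidRank.card_filter_comp_perm (Equiv.swap i (Fin.last n))
        (fun j => S j ω < S i ω)
    omega
  have hAmeas : ∀ i, MeasurableSet (A i) := by
    intro i
    rw [hApre i]
    exact (measurable_pi_lambda _ fun j => hmeas _) hBmeas
  set c : ℝ≥0∞ := Measure.pi (fun _ : Fin (n + 1) => μ) B with hc
  have hPA : ∀ i, P (A i) = c := by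
    intro i
    rw [hApre i, ← Measure.map_apply (measurable_pi_lambda _ fun j => hmeas _) hBmeas,
      hjoint (Equiv.swap i (Fin.last n))]
  have hsumc : ∑ _i : Fin (n + 1), P (A _i) = (n + 1 : ℝ≥0∞) * c := by
    simp only [hPA, Finset.sum_const, Finset.card_univ, Fintype.card_fin, nsmul_eq_mul]
    push_cast
    ring
  have hsumind : ∀ ω : Ω, (∑ i, (A i).indicator (fun _ => (1 : ℝ≥0∞)) ω)
      = (((univ.filter fun i =>
          (univ.filter fun j => S j ω < S i ω).card < k).card : ℕ) : ℝ≥0∞) := by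
    intro ω
    rw [Finset.card_filter]
    push_cast
    refine Finset.sum_congr rfl fun i _ => ?_
    by_cases h : (univ.filter fun j => S j ω < S i ω).card < k
    · simp [Set.indicator, hA, h]
    · simp [Set.indicator, hA, h]
  have key : ∑ i, P (A i) = ∫⁻ ω, (((univ.filter fun i =>
      (univ.filter fun j => S j ω < S i ω).card < k).card : ℕ) : ℝ≥0∞) ∂P := by
    calc ∑ i, P (A i) = ∑ i, ∫⁻ ω, (A i).indicator (fun _ => (1 : ℝ≥0∞)) ω ∂P :=
          Finset.sum_congr rfl fun i _ => (lintegral_indicator_one (hAmeas i)).symm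
      _ = ∫⁻ ω, ∑ i, (A i).indicator (fun _ => (1 : ℝ≥0∞)) ω ∂P :=
          (lintegral_finset_sum _ fun i _ => measurable_const.indicator (hAmeas i)).symm
      _ = _ := lintegral_congr fun ω => hsumind ω
  have hge : (k : ℝ≥0∞) ≤ (n + 1 : ℝ≥0∞) * c := by
    rw [← hsumc, key]
    calc (k : ℝ≥0∞) = ∫⁻ _, (k : ℝ≥0∞) ∂P := by simp
      _ ≤ _ := lintegral_mono fun ω =>
          Nat.cast_le.mpr (IidRank.k_le_card_rank_lt (fun i => S i ω) hk)
  have hn1 : ((n : ℝ≥0∞) + 1) ≠ 0 := by simp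
  have hn1' : ((n : ℝ≥0∞) + 1) ≠ ∞ := by
    simp [ENNReal.add_eq_top]
  have hofReal : ENNReal.ofReal ((k : ℝ) / (n + 1)) = (k : ℝ≥0∞) / ((n : ℝ≥0∞) + 1) := by
    rw [ENNReal.ofReal_div_of_pos (by positivity)]
    congr 1
    · exact ENNReal.ofReal_natCast k
    · rw [show ((n : ℝ) + 1) = ((n + 1 : ℕ) : ℝ) by push_cast; ring, ENNReal.ofReal_natCast]
      push_cast; ring
  have hevent : {ω | S (Fin.last n) ω ≤ orderStat (fun i => S i ω) ⟨k - 1, by omega⟩}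
      = A (Fin.last n) := by
    ext ω
    simp only [Set.mem_setOf_eq, hA]
    exact IidRank.le_orderStat_iff (fun i => S i ω) (S (Fin.last n) ω) hk1 hk
  constructor
  · rw [hevent, hPA (Fin.last n), hofReal, ENNReal.div_le_iff hn1 hn1']
    calc (k : ℝ≥0∞) ≤ (n + 1 : ℝ≥0∞) * c := hge
      _ = c * ((n : ℝ≥0∞) + 1) := by ring
  · intro hdist
    have hDmeas : MeasurableSet {ω | ∀ i j : Fin (n + 1), i ≠ j → S i ω ≠ S j ω} := by
      have h : {ω | ∀ i j : Fin (n + 1), i ≠ j → S i ω ≠ S j ω}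
          = ⋂ (i) (j), {ω | i ≠ j → S i ω ≠ S j ω} := by ext ω; simp
      rw [h]
      refine MeasurableSet.iInter fun i => MeasurableSet.iInter fun j => ?_
      by_cases hij : i = j
      · simp [hij]
      · have h2 : {ω | i ≠ j → S i ω ≠ S j ω} = {ω | S i ω = S j ω}ᶜ := by
          ext ω; simp [hij]
        rw [h2]
        exact (measurableSet_eq_fun (hmeas i) (hmeas j)).compl
    have hae : ∀ᵐ ω ∂P, ∀ i j : Fin (n + 1), i ≠ j → S i ω ≠ S j ω := by
      rw [ae_iff]
      have h3 := (prob_compl_eq_zero_iff hDmeas).mpr hdist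
      exact h3
    have hinj : ∀ᵐ ω ∂P, Function.Injective fun i => S i ω := by
      filter_upwards [hae] with ω hω
      intro i j hij
      by_contra hne
      exact hω i j hne hij
    have keyeq : ∑ i, P (A i) = (k : ℝ≥0∞) := by
      rw [key]
      have h4 : ∫⁻ ω, (((univ.filter fun i =>
          (univ.filter fun j => S j ω < S i ω).card < k).card : ℕ) : ℝ≥0∞) ∂P
          = ∫⁻ _, (k : ℝ≥0∞) ∂P := by
        apply lintegral_congr_ae
        filter_upwards [hinj] with ω hω
        rw [IidRank.card_rank_lt_of_injective (fun i => S i ω) hω hk]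
      rw [h4]
      simp
    rw [hevent, hPA (Fin.last n), hofReal]
    have h5 : (n + 1 : ℝ≥0∞) * c = (k : ℝ≥0∞) := by rw [← hsumc]; exact keyeq
    rw [ENNReal.eq_div_iff hn1 hn1']
    exact h5
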